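/- For all real constants c1, c2, c3, δ > 0 there exists γ > 0 such that the following holds for all sufficiently large positive integers n. Suppose λ_1, …, λ_m are pairwise distinct partitions of n, each of which satisfies: (I) its largest part and its number of parts both lie strictly between c1·√n·log n and c2·√n·log n; (II) at most n^{1−δ} cells (j, i) of its Ferrers diagram satisfy j > 0.1·c1·√n·log n or i > 0.1·c1·√n·log n; and (III) it has at least c3·√n parts of size at least c3·√n. Suppose D_1, …, D_m are pairwise non-overlapping translates of the Ferrers diagrams of λ_1, …, λ_m. Then for every axis-parallel square A of side 0.8·c1·√n·log n, the number of cells in A covered by D_1 ∪ … ∪ D_m is at most γ·n·log n. -/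

import Mathlib

open Filter Real

/-- The Ferrers diagram of a partition: the cell `(j, i)` (column `j`, row `i`)
belongs iff `1 ≤ j`, `1 ≤ i`, and at least `i` parts are `≥ j`
(i.e. row `i` has length `≥ j`). -/
def ferrersDiagram {n : ℕ} (lam : Nat.Partition n) : Set (ℤ × ℤ) :=
  {c | 1 ≤ c.1 ∧ 1 ≤ c.2 ∧ c.2 ≤ ((lam.parts.filter (fun x => c.1 ≤ (x : ℤ))).card : ℤ)}

/-- The translate of the Ferrers diagram of `lam` with apex at `(a, b)`. -/
def placedFerrers {n : ℕ} (lam : Nat.Partition n) (a b : ℤ) : Set (ℤ × ℤ) :=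
  (fun c : ℤ × ℤ => (c.1 + a - 1, c.2 + b - 1)) '' ferrersDiagram lam

/-- The number `p(n)` of partitions of `n`. -/
def numPartitions (n : ℕ) : ℕ := Fintype.card (Nat.Partition n)

/-- The rectangle `R_n` of width `p(n)` and height `n`. -/
def rectR (n : ℕ) : Set (ℤ × ℤ) :=
  {c | 1 ≤ c.1 ∧ c.1 ≤ (numPartitions n : ℤ) ∧ 1 ≤ c.2 ∧ c.2 ≤ (n : ℤ)}

namespace CoverAux

lemma coe_multiset_eq_map {s : Multiset ℕ} :
    (do let a ← s; pure ((a:ℤ)) : Multiset ℤ) = s.map (fun x : ℕ => (x:ℤ)) := by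
  show Multiset.bind s (fun a => {(a:ℤ)}) = _
  rw [Multiset.bind_singleton]

/-- number of parts `≥ j` -/
noncomputable def hcol {n : ℕ} (lam : Nat.Partition n) (j : ℤ) : ℕ :=
  Multiset.card (lam.parts.filter (fun x : ℕ => j ≤ (x:ℤ)))

lemma mem_ferrers {n : ℕ} {lam : Nat.Partition n} {j i : ℤ} :
    (j, i) ∈ ferrersDiagram lam ↔ 1 ≤ j ∧ 1 ≤ i ∧ i ≤ (hcol lam j : ℤ) := by
  show 1 ≤ j ∧ 1 ≤ i ∧ _ ↔ _
  rw [coe_multiset_eq_map, Multiset.filter_map, Multiset.card_map]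
  exact Iff.rfl

lemma translate_inj (a b : ℤ) : Function.Injective (fun c : ℤ × ℤ => (c.1 + a - 1, c.2 + b - 1)) := by
  intro c d h
  simp only [Prod.mk.injEq] at h
  ext <;> omega

lemma mem_placedFerrers {n : ℕ} {lam : Nat.Partition n} {a b : ℤ} {c : ℤ × ℤ} :
    c ∈ placedFerrers lam a b ↔ (c.1 - a + 1, c.2 - b + 1) ∈ ferrersDiagram lam := by
  constructor
  · rintro ⟨d, hd, rfl⟩
    have h : (d.1 + a - 1 - a + 1, d.2 + b - 1 - b + 1) = d := by ext <;> simp <;> ring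
    simpa [h] using hd
  · intro h
    exact ⟨(c.1 - a + 1, c.2 - b + 1), h, by ext <;> simp <;> ring⟩

lemma parts_le_n {n : ℕ} (lam : Nat.Partition n) {x : ℕ} (hx : x ∈ lam.parts) : x ≤ n := by
  have := Multiset.single_le_sum (fun y _ => Nat.zero_le y) x hx
  rwa [lam.parts_sum] at this

lemma card_parts_le_n {n : ℕ} (lam : Nat.Partition n) : Multiset.card lam.parts ≤ n := by
  calc Multiset.card lam.parts = (lam.parts.map (fun _ => 1)).sum := by simp
  _ ≤ (lam.parts.map id).sum := Multiset.sum_map_le_sum_map _ _ (fun i hi => lam.parts_pos hi)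
  _ = n := by simpa using lam.parts_sum

lemma hcol_le_card {n : ℕ} (lam : Nat.Partition n) (j : ℤ) :
    hcol lam j ≤ Multiset.card lam.parts :=
  Multiset.card_le_card (Multiset.filter_le _ _)

lemma exists_part_of_hcol_pos {n : ℕ} {lam : Nat.Partition n} {j : ℤ} (h : 0 < hcol lam j) :
    ∃ x ∈ lam.parts, j ≤ (x:ℤ) := by
  obtain ⟨x, hx⟩ := Multiset.card_pos_iff_exists_mem.1 h
  rw [Multiset.mem_filter] at hx
  exact ⟨x, hx.1, hx.2⟩

lemma ferrers_subset_box {n : ℕ} (lam : Nat.Partition n) :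
    ferrersDiagram lam ⊆ ↑((Finset.Icc (1:ℤ) (n:ℤ)) ×ˢ (Finset.Icc (1:ℤ) (n:ℤ))) := by
  rintro ⟨j, i⟩ hc
  rw [mem_ferrers] at hc
  obtain ⟨h1, h2, h3⟩ := hc
  have hpos : 0 < hcol lam j := by omega
  obtain ⟨x, hx1, hx2⟩ := exists_part_of_hcol_pos hpos
  have hxn : x ≤ n := parts_le_n lam hx1
  have hcn := le_trans (hcol_le_card lam j) (card_parts_le_n lam)
  simp only [Finset.coe_product, Set.mem_prod, Finset.mem_coe, Finset.mem_Icc]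
  constructor
  · exact ⟨h1, le_trans hx2 (by exact_mod_cast hxn)⟩
  · exact ⟨h2, by exact_mod_cast le_trans h3 (by exact_mod_cast hcn)⟩

lemma ferrers_finite {n : ℕ} (lam : Nat.Partition n) : (ferrersDiagram lam).Finite :=
  Set.Finite.subset (Finset.finite_toSet _) (ferrers_subset_box lam)

lemma placed_finite {n : ℕ} (lam : Nat.Partition n) (a b : ℤ) : (placedFerrers lam a b).Finite :=
  (ferrers_finite lam).image _

lemma sum_filter_card_swap (s : Multiset ℕ) (J : Finset ℤ) :
    ∑ j ∈ J, Multiset.card (s.filter (fun x : ℕ => j ≤ (x:ℤ)))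
      = (s.map (fun x : ℕ => (J.filter (fun j => j ≤ (x:ℤ))).card)).sum := by
  classical
  induction s using Multiset.induction_on with
  | empty => simp
  | cons a s ih =>
      simp only [Multiset.filter_cons, Multiset.card_add, Multiset.map_cons, Multiset.sum_cons,
        Finset.sum_add_distrib, ih]
      congr 1
      rw [Finset.card_filter]
      apply Finset.sum_congr rfl
      intro j _
      split <;> simp

lemma ncard_ferrers_le {n : ℕ} (lam : Nat.Partition n) : (ferrersDiagram lam).ncard ≤ n := by
  classical
  set G : Finset (ℤ × ℤ) := ((Finset.Icc (1:ℤ) (n:ℤ)) ×ˢ (Finset.Icc (1:ℤ) (n:ℤ))).filter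
    (fun c => c ∈ ferrersDiagram lam) with hG
  have hFG : ferrersDiagram lam = ↑G := by
    ext c
    simp only [hG, Finset.coe_filter, Set.mem_setOf_eq]
    constructor
    · intro hc
      have := ferrers_subset_box lam hc
      simp only [Finset.coe_product, Set.mem_prod, Finset.mem_coe] at this
      exact ⟨by rw [Finset.mem_product]; exact this, hc⟩
    · rintro ⟨-, h⟩
      exact h
  rw [hFG, Set.ncard_coe_finset]
  have hcard : G.card = ∑ j ∈ Finset.Icc (1:ℤ) (n:ℤ),
      (G.filter (fun c => c.1 = j)).card := by
    apply Finset.card_eq_sum_card_fiberwise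
    intro c hc
    simp only [Finset.mem_coe, hG, Finset.mem_filter, Finset.mem_product] at hc
    exact hc.1.1
  have hfiber : ∀ j : ℤ, (G.filter (fun c => c.1 = j)).card ≤ hcol lam j := by
    intro j
    have hsub : G.filter (fun c => c.1 = j) ⊆
        ({j} : Finset ℤ) ×ˢ (Finset.Icc (1:ℤ) ((hcol lam j : ℤ))) := by
      intro c hc
      simp only [hG, Finset.mem_filter, Finset.mem_product] at hc
      obtain ⟨⟨-, hmem⟩, h4⟩ := hc
      have : (c.1, c.2) ∈ ferrersDiagram lam := by simpa using hmem
      rw [mem_ferrers] at this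
      rw [Finset.mem_product, Finset.mem_singleton, Finset.mem_Icc]
      subst h4
      exact ⟨rfl, this.2.1, this.2.2⟩
    calc (G.filter (fun c => c.1 = j)).card ≤ _ := Finset.card_le_card hsub
    _ = hcol lam j := by rw [Finset.card_product, Finset.card_singleton, Int.card_Icc]; simp
  calc G.card ≤ ∑ j ∈ Finset.Icc (1:ℤ) (n:ℤ), hcol lam j := by
        rw [hcard]; exact Finset.sum_le_sum (fun j _ => hfiber j)
  _ = (lam.parts.map (fun x : ℕ => ((Finset.Icc (1:ℤ) (n:ℤ)).filter (fun j => j ≤ (x:ℤ))).card)).sum :=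
        sum_filter_card_swap _ _
  _ ≤ (lam.parts.map id).sum := by
        apply Multiset.sum_map_le_sum_map
        intro x hx
        have hsub : (Finset.Icc (1:ℤ) (n:ℤ)).filter (fun j => j ≤ (x:ℤ)) ⊆ Finset.Icc (1:ℤ) (x:ℤ) := by
          intro j hj
          simp only [Finset.mem_filter, Finset.mem_Icc] at hj ⊢
          exact ⟨hj.1.1, hj.2⟩
        calc _ ≤ (Finset.Icc (1:ℤ) (x:ℤ)).card := Finset.card_le_card hsub
        _ = x := by rw [Int.card_Icc]; simp
  _ = n := by simpa using lam.parts_sum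

lemma ncard_placed_le {n : ℕ} (lam : Nat.Partition n) (a b : ℤ) :
    (placedFerrers lam a b).ncard ≤ n := by
  rw [placedFerrers, Set.ncard_image_of_injective _ (translate_inj a b)]
  exact ncard_ferrers_le lam

lemma ncard_biUnion_le {α ι : Type*} (T : Finset ι) (s : ι → Set α)
    (h : ∀ t ∈ T, (s t).Finite) :
    (⋃ t ∈ T, s t).ncard ≤ ∑ t ∈ T, (s t).ncard := by
  classical
  induction T using Finset.induction_on with
  | empty => simp
  | @insert a T ha ih =>
      rw [Finset.set_biUnion_insert, Finset.sum_insert ha]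
      calc (s a ∪ ⋃ t ∈ T, s t).ncard ≤ (s a).ncard + (⋃ t ∈ T, s t).ncard :=
            Set.ncard_union_le _ _
      _ ≤ _ := by
            gcongr
            exact ih (fun t ht => h t (Finset.mem_insert_of_mem ht))

lemma emod_diff_lt {x y B : ℤ} (hB : 0 < B) (h : x / B = y / B) : |x - y| < B := by
  have hx := Int.mul_ediv_add_emod x B
  have hy := Int.mul_ediv_add_emod y B
  have h1 : 0 ≤ x % B := Int.emod_nonneg x hB.ne'
  have h2 : x % B < B := Int.emod_lt_of_pos x hB
  have h3 : 0 ≤ y % B := Int.emod_nonneg y hB.ne'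
  have h4 : y % B < B := Int.emod_lt_of_pos y hB
  rw [h] at hx
  rw [abs_lt]
  omega

lemma card_le_of_sep {ι : Type*} (T : Finset ι) (f : ι → ℤ) (B lo hi : ℤ) (hB : 0 < B)
    (hlohi : lo ≤ hi)
    (hsep : ∀ s ∈ T, ∀ t ∈ T, s ≠ t → B ≤ |f s - f t|)
    (hlo : ∀ t ∈ T, lo ≤ f t) (hhi : ∀ t ∈ T, f t ≤ hi) :
    (T.card : ℤ) ≤ (hi - lo) / B + 1 := by
  classical
  have key : T.card ≤ (Finset.Icc (0:ℤ) ((hi - lo)/B)).card := by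
    apply Finset.card_le_card_of_injOn (fun t => (f t - lo) / B)
    · intro t ht
      rw [Finset.mem_coe, Finset.mem_Icc]
      exact ⟨Int.ediv_nonneg (by linarith [hlo t ht]) hB.le,
             Int.ediv_le_ediv hB (by linarith [hhi t ht])⟩
    · intro s hs t ht hst
      by_contra hne
      have hsep' := hsep s hs t ht hne
      have hlt := emod_diff_lt hB hst
      have heq : f s - lo - (f t - lo) = f s - f t := by ring
      rw [heq] at hlt
      linarith
  rw [Int.card_Icc] at key
  have h0 : 0 ≤ (hi - lo)/B := Int.ediv_nonneg (by linarith) hB.le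
  omega

lemma card_le_of_sep2 {ι : Type*} (T : Finset ι) (f g : ι → ℤ) (B lo1 hi1 lo2 hi2 : ℤ)
    (hB : 0 < B) (h1 : lo1 ≤ hi1) (h2 : lo2 ≤ hi2)
    (hsep : ∀ s ∈ T, ∀ t ∈ T, s ≠ t → B ≤ |f s - f t| ∨ B ≤ |g s - g t|)
    (hlo1 : ∀ t ∈ T, lo1 ≤ f t) (hhi1 : ∀ t ∈ T, f t ≤ hi1)
    (hlo2 : ∀ t ∈ T, lo2 ≤ g t) (hhi2 : ∀ t ∈ T, g t ≤ hi2) :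
    (T.card : ℤ) ≤ ((hi1 - lo1) / B + 1) * ((hi2 - lo2) / B + 1) := by
  classical
  have key : T.card ≤ ((Finset.Icc (0:ℤ) ((hi1 - lo1)/B)) ×ˢ (Finset.Icc (0:ℤ) ((hi2 - lo2)/B))).card := by
    apply Finset.card_le_card_of_injOn (fun t => ((f t - lo1) / B, (g t - lo2) / B))
    · intro t ht
      rw [Finset.mem_coe, Finset.mem_product, Finset.mem_Icc, Finset.mem_Icc]
      exact ⟨⟨Int.ediv_nonneg (by linarith [hlo1 t ht]) hB.le,
              Int.ediv_le_ediv hB (by linarith [hhi1 t ht])⟩,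
             ⟨Int.ediv_nonneg (by linarith [hlo2 t ht]) hB.le,
              Int.ediv_le_ediv hB (by linarith [hhi2 t ht])⟩⟩
    · intro s hs t ht hst
      by_contra hne
      simp only [Prod.mk.injEq] at hst
      have hltf := emod_diff_lt hB hst.1
      have hltg := emod_diff_lt hB hst.2
      have heqf : f s - lo1 - (f t - lo1) = f s - f t := by ring
      have heqg : g s - lo2 - (g t - lo2) = g s - g t := by ring
      rw [heqf] at hltf
      rw [heqg] at hltg
      rcases hsep s hs t ht hne with h | h <;> linarith
  rw [Finset.card_product, Int.card_Icc, Int.card_Icc] at key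
  have h01 : 0 ≤ (hi1 - lo1)/B := Int.ediv_nonneg (by linarith) hB.le
  have h02 : 0 ≤ (hi2 - lo2)/B := Int.ediv_nonneg (by linarith) hB.le
  have e1 : (((hi1 - lo1)/B + 1 - 0).toNat : ℤ) = (hi1 - lo1)/B + 1 := by
    rw [Int.toNat_of_nonneg (by omega)]; ring
  have e2 : (((hi2 - lo2)/B + 1 - 0).toNat : ℤ) = (hi2 - lo2)/B + 1 := by
    rw [Int.toNat_of_nonneg (by omega)]; ring
  calc (T.card : ℤ) ≤ ((((hi1 - lo1)/B + 1 - 0).toNat * ((hi2 - lo2)/B + 1 - 0).toNat : ℕ) : ℤ) := by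
        exact_mod_cast key
  _ = _ := by push_cast [e1, e2]; ring

lemma intCast_ediv_le {x B : ℤ} (hB : 0 < B) : ((x / B : ℤ) : ℝ) ≤ (x : ℝ) / (B : ℝ) := by
  rw [le_div_iff₀ (by exact_mod_cast hB)]
  have h1 : x / B * B ≤ x := by
    have h2 := Int.mul_ediv_add_emod x B
    have h3 := Int.emod_nonneg x hB.ne'
    nlinarith [h2, h3]
  calc ((x / B : ℤ) : ℝ) * (B:ℝ) = ((x / B * B : ℤ) : ℝ) := by push_cast; ring
  _ ≤ (x:ℝ) := by exact_mod_cast h1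

end CoverAux


namespace CoverAux

/-- Eventually, any real constant is at most `√n`. -/
lemma eventually_le_sqrt (C : ℝ) : ∀ᶠ n : ℕ in atTop, C ≤ Real.sqrt n := by
  filter_upwards [eventually_ge_atTop (⌈C^2⌉₊ + 1)] with n hn
  rcases le_or_gt C 0 with hC | hC
  · exact le_trans hC (Real.sqrt_nonneg _)
  · rw [show C = √(C^2) by rw [Real.sqrt_sq hC.le]]
    apply Real.sqrt_le_sqrt
    calc C^2 ≤ (⌈C^2⌉₊ : ℝ) := Nat.le_ceil _
    _ ≤ n := by exact_mod_cast Nat.le_of_succ_le hn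

lemma eventually_one_le_log : ∀ᶠ n : ℕ in atTop, (1:ℝ) ≤ Real.log n := by
  filter_upwards [eventually_ge_atTop 3] with n hn
  have hn3 : (3:ℝ) ≤ (n:ℝ) := by exact_mod_cast hn
  rw [Real.le_log_iff_exp_le (by linarith)]
  calc Real.exp 1 ≤ 2.7182818286 := Real.exp_one_lt_d9.le
  _ ≤ 3 := by norm_num
  _ ≤ n := hn3

end CoverAux

/-- Auxiliary: diagram `t` meets `A` in a cell near its apex. -/
def NearMeet {n : ℕ} {m : ℕ} (lam : Fin m → Nat.Partition n) (pos : Fin m → ℤ × ℤ)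
    (A : Set (ℤ × ℤ)) (θ : ℝ) (t : Fin m) : Prop :=
  ∃ c : ℤ × ℤ, c ∈ A ∧ c ∈ placedFerrers (lam t) (pos t).1 (pos t).2 ∧
    ((c.1 - (pos t).1 + 1 : ℤ) : ℝ) ≤ θ ∧ ((c.2 - (pos t).2 + 1 : ℤ) : ℝ) ≤ θ


set_option maxHeartbeats 1000000 in
/-- For all `c1, c2, c3, δ > 0` there is `γ > 0` such that for all sufficiently
large `n`: any pairwise non-overlapping translates of Ferrers diagrams of
pairwise distinct partitions of `n` satisfying conditions (I), (II), (III)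
cover at most `γ·n·log n` cells of any axis-parallel square of side
`0.8·c1·√n·log n`. -/
theorem covered_area_in_square_small :
    ∀ c1 c2 c3 δ : ℝ, 0 < c1 → 0 < c2 → 0 < c3 → 0 < δ →
    ∃ γ : ℝ, 0 < γ ∧ ∀ᶠ n : ℕ in atTop,
      ∀ (m : ℕ) (lam : Fin m → Nat.Partition n) (pos : Fin m → ℤ × ℤ),
        Function.Injective lam →
        -- (I): largest part and number of parts strictly between the bounds
        (∀ t, (∃ x ∈ (lam t).parts, c1 * Real.sqrt n * Real.log n < (x : ℝ)) ∧
              (∀ x ∈ (lam t).parts, (x : ℝ) < c2 * Real.sqrt n * Real.log n) ∧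
              c1 * Real.sqrt n * Real.log n < ((lam t).parts.card : ℝ) ∧
              ((lam t).parts.card : ℝ) < c2 * Real.sqrt n * Real.log n) →
        -- (II): at most n^(1-δ) cells far from the apex
        (∀ t, ((ferrersDiagram (lam t) ∩ {c : ℤ × ℤ |
            0.1 * c1 * Real.sqrt n * Real.log n < (c.1 : ℝ) ∨
            0.1 * c1 * Real.sqrt n * Real.log n < (c.2 : ℝ)}).ncard : ℝ) ≤
              (n : ℝ) ^ ((1 : ℝ) - δ)) →
        -- (III): at least c3·√n parts of size at least c3·√n
        (∀ t, c3 * Real.sqrt n ≤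
            (((lam t).parts.filter fun x : ℕ =>
              c3 * Real.sqrt n ≤ (x : ℝ)).card : ℝ)) →
        -- pairwise non-overlapping
        (Pairwise fun s t =>
          Disjoint (placedFerrers (lam s) (pos s).1 (pos s).2)
            (placedFerrers (lam t) (pos t).1 (pos t).2)) →
        -- every axis-parallel square of side 0.8·c1·√n·log n
        ∀ a b : ℤ,
          ((({c : ℤ × ℤ |
                (a : ℝ) ≤ (c.1 : ℝ) ∧
                (c.1 : ℝ) < (a : ℝ) + 0.8 * c1 * Real.sqrt n * Real.log n ∧
                (b : ℝ) ≤ (c.2 : ℝ) ∧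
                (c.2 : ℝ) < (b : ℝ) + 0.8 * c1 * Real.sqrt n * Real.log n}) ∩
              ⋃ t, placedFerrers (lam t) (pos t).1 (pos t).2).ncard : ℝ) ≤
            γ * n * Real.log n := by
  intro c1 c2 c3 δ hc1 hc2 hc3 hδ
  classical
  obtain ⟨K1, hK1def⟩ : ∃ K : ℝ, K = 2*(c1+c2)/c3 + 2 := ⟨_, rfl⟩
  have hK1pos : 0 < K1 := by rw [hK1def]; positivity
  refine ⟨4*c1/c3 + 3, by positivity, ?_⟩
  -- eventual hypotheses
  have hev4 : ∀ᶠ n : ℕ in atTop,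
      (K1 * Real.log n)^2 * (n:ℝ)^((1:ℝ)-δ) ≤ (n:ℝ) * Real.log n := by
    have hlit := isLittleO_log_rpow_atTop hδ
    have hb := hlit.def (show (0:ℝ) < 1/K1^2 by positivity)
    have hcomp := (tendsto_natCast_atTop_atTop (R := ℝ)).eventually hb
    filter_upwards [hcomp, CoverAux.eventually_one_le_log, eventually_ge_atTop 1] with n hn hlog hn1
    have hn1' : (1:ℝ) ≤ (n:ℝ) := by exact_mod_cast hn1
    have hn0 : (0:ℝ) < (n:ℝ) := by linarith
    rw [Real.norm_eq_abs, Real.norm_eq_abs, abs_of_nonneg (by linarith : (0:ℝ) ≤ Real.log n),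
      abs_of_nonneg (Real.rpow_nonneg hn0.le _)] at hn
    have hkey : K1^2 * Real.log n ≤ (n:ℝ)^δ := by
      rw [div_mul_eq_mul_div, one_mul] at hn
      calc K1^2 * Real.log n ≤ K1^2 * ((n:ℝ)^δ / K1^2) := by gcongr
      _ = (n:ℝ)^δ := by field_simp
    have hpow : (n:ℝ)^δ * (n:ℝ)^((1:ℝ)-δ) = (n:ℝ) := by
      rw [← Real.rpow_add hn0]
      norm_num
    calc (K1 * Real.log n)^2 * (n:ℝ)^((1:ℝ)-δ)
        = (K1^2 * Real.log n) * Real.log n * (n:ℝ)^((1:ℝ)-δ) := by ring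
    _ ≤ (n:ℝ)^δ * Real.log n * (n:ℝ)^((1:ℝ)-δ) := by
        have h1 : (0:ℝ) ≤ Real.log n := by linarith
        have h2 := Real.rpow_nonneg hn0.le ((1:ℝ)-δ)
        exact mul_le_mul_of_nonneg_right (mul_le_mul_of_nonneg_right hkey h1) h2
    _ = ((n:ℝ)^δ * (n:ℝ)^((1:ℝ)-δ)) * Real.log n := by ring
    _ = (n:ℝ) * Real.log n := by rw [hpow]
  filter_upwards [hev4, CoverAux.eventually_one_le_log,
    CoverAux.eventually_le_sqrt (4/c3), CoverAux.eventually_le_sqrt (10/c1),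
    eventually_ge_atTop 1] with n hEV4 hLG1 hSQ1 hSQ2 hn1
  intro m lam pos hinj hI hII hIII hdisj α β
  set SQ : ℝ := Real.sqrt n with hSQdef
  set LG : ℝ := Real.log n with hLGdef
  have hn1' : (1:ℝ) ≤ (n:ℝ) := by exact_mod_cast hn1
  have hSQpos : 0 < SQ := Real.sqrt_pos.2 (by linarith)
  have hLGpos : 0 < LG := by linarith
  have hc3SQ : 4 ≤ c3 * SQ := by
    have := mul_le_mul_of_nonneg_left hSQ1 hc3.le
    calc (4:ℝ) = c3 * (4/c3) := by field_simp
    _ ≤ c3 * SQ := this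
  have hc1SQ : 10 ≤ c1 * SQ := by
    have := mul_le_mul_of_nonneg_left hSQ2 hc1.le
    calc (10:ℝ) = c1 * (10/c1) := by field_simp
    _ ≤ c1 * SQ := this
  have hth1 : (1:ℝ) ≤ 0.1 * c1 * SQ * LG := by nlinarith
  set A : Set (ℤ × ℤ) := {c : ℤ × ℤ |
      (α : ℝ) ≤ (c.1 : ℝ) ∧ (c.1 : ℝ) < (α : ℝ) + 0.8 * c1 * SQ * LG ∧
      (β : ℝ) ≤ (c.2 : ℝ) ∧ (c.2 : ℝ) < (β : ℝ) + 0.8 * c1 * SQ * LG} with hAdef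
  set B : ℤ := ⌊c3 * SQ⌋ with hBdef
  have hB0 : (0:ℤ) < B := by
    rw [hBdef, Int.lt_iff_add_one_le, zero_add, Int.le_floor]
    norm_num; linarith
  have hBle : (B:ℝ) ≤ c3 * SQ := Int.floor_le _
  have hBge : c3 * SQ / 2 ≤ (B:ℝ) := by
    have h := Int.sub_one_lt_floor (c3 * SQ)
    rw [← hBdef] at h
    linarith
  -- membership lemmas
  have hbottom : ∀ (t : Fin m) (j : ℤ), 1 ≤ j → (j:ℝ) ≤ c1 * SQ * LG →
      (j, (1:ℤ)) ∈ ferrersDiagram (lam t) := by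
    intro t j hj hjle
    rw [CoverAux.mem_ferrers]
    refine ⟨hj, le_refl _, ?_⟩
    obtain ⟨x, hx, hxgt⟩ := (hI t).1
    have hxf : x ∈ (lam t).parts.filter (fun x : ℕ => j ≤ (x:ℤ)) := by
      rw [Multiset.mem_filter]
      refine ⟨hx, ?_⟩
      have : (j:ℝ) ≤ (x:ℝ) := le_trans hjle hxgt.le
      exact_mod_cast this
    have hpos : 0 < CoverAux.hcol (lam t) j :=
      Multiset.card_pos_iff_exists_mem.2 ⟨x, hxf⟩
    omega
  have hleft : ∀ (t : Fin m) (i : ℤ), 1 ≤ i → (i:ℝ) ≤ c1 * SQ * LG →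
      ((1:ℤ), i) ∈ ferrersDiagram (lam t) := by
    intro t i hi hile
    rw [CoverAux.mem_ferrers]
    refine ⟨le_refl _, hi, ?_⟩
    have hfe : (lam t).parts.filter (fun x : ℕ => (1:ℤ) ≤ (x:ℤ)) = (lam t).parts := by
      rw [Multiset.filter_eq_self]
      intro x hx
      exact_mod_cast (lam t).parts_pos hx
    have hcard : (CoverAux.hcol (lam t) 1 : ℝ) = (Multiset.card (lam t).parts : ℝ) := by
      rw [CoverAux.hcol, hfe]
    have : (i:ℝ) ≤ (CoverAux.hcol (lam t) 1 : ℝ) := by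
      rw [hcard]; exact le_trans hile (hI t).2.2.1.le
    exact_mod_cast this
  have hblock : ∀ (t : Fin m) (j i : ℤ), 1 ≤ j → j ≤ B → 1 ≤ i → i ≤ B →
      (j, i) ∈ ferrersDiagram (lam t) := by
    intro t j i hj hjB hi hiB
    rw [CoverAux.mem_ferrers]
    refine ⟨hj, hi, ?_⟩
    have hmono : Multiset.card ((lam t).parts.filter (fun x : ℕ => c3 * SQ ≤ (x:ℝ)))
        ≤ CoverAux.hcol (lam t) j := by
      apply Multiset.card_le_card
      apply Multiset.monotone_filter_right
      intro x hx
      have hc : (j:ℝ) ≤ (x:ℝ) := by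
        calc (j:ℝ) ≤ (B:ℝ) := by exact_mod_cast hjB
        _ ≤ c3 * SQ := hBle
        _ ≤ x := hx
      exact_mod_cast hc
    have hc : (i:ℝ) ≤ (CoverAux.hcol (lam t) j : ℝ) := by
      calc (i:ℝ) ≤ (B:ℝ) := by exact_mod_cast hiB
      _ ≤ c3 * SQ := hBle
      _ ≤ (Multiset.card ((lam t).parts.filter (fun x : ℕ => c3 * SQ ≤ (x:ℝ))) : ℝ) := hIII t
      _ ≤ _ := by exact_mod_cast hmono
    exact_mod_cast hc
  have hcellb : ∀ (t : Fin m) (j i : ℤ), (j, i) ∈ ferrersDiagram (lam t) →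
      1 ≤ j ∧ 1 ≤ i ∧ (j:ℝ) < c2 * SQ * LG ∧ (i:ℝ) < c2 * SQ * LG := by
    intro t j i hmem
    rw [CoverAux.mem_ferrers] at hmem
    obtain ⟨h1, h2, h3⟩ := hmem
    have hpos : 0 < CoverAux.hcol (lam t) j := by omega
    obtain ⟨x, hx, hjx⟩ := CoverAux.exists_part_of_hcol_pos hpos
    have hxlt := (hI t).2.1 x hx
    have hjR : (j:ℝ) < c2 * SQ * LG := lt_of_le_of_lt (by exact_mod_cast hjx) hxlt
    have hiR : (i:ℝ) < c2 * SQ * LG := by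
      have h4 : (i:ℝ) ≤ (CoverAux.hcol (lam t) j : ℝ) := by exact_mod_cast h3
      have h5 : (CoverAux.hcol (lam t) j : ℝ) ≤ (Multiset.card (lam t).parts : ℝ) := by
        exact_mod_cast CoverAux.hcol_le_card (lam t) j
      calc (i:ℝ) ≤ _ := le_trans h4 h5
      _ < c2 * SQ * LG := (hI t).2.2.2
    exact ⟨h1, h2, hjR, hiR⟩
  -- windows for apexes
  have hwin_near : ∀ t : Fin m, NearMeet lam pos A (0.1 * c1 * SQ * LG) t →
      ((α:ℝ) - 0.1*c1*SQ*LG < ((pos t).1 : ℝ) ∧ ((pos t).1:ℝ) < (α:ℝ) + 0.8*c1*SQ*LG) ∧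
      ((β:ℝ) - 0.1*c1*SQ*LG < ((pos t).2 : ℝ) ∧ ((pos t).2:ℝ) < (β:ℝ) + 0.8*c1*SQ*LG) := by
    intro t ht
    obtain ⟨c, hcA, hcD, hj, hi⟩ := ht
    rw [CoverAux.mem_placedFerrers] at hcD
    rw [CoverAux.mem_ferrers] at hcD
    obtain ⟨h1, h2, -⟩ := hcD
    obtain ⟨hA1, hA2, hA3, hA4⟩ := hcA
    have ha_le : ((pos t).1 : ℝ) ≤ (c.1 : ℝ) := by exact_mod_cast (by omega : (pos t).1 ≤ c.1)
    have hb_le : ((pos t).2 : ℝ) ≤ (c.2 : ℝ) := by exact_mod_cast (by omega : (pos t).2 ≤ c.2)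
    push_cast at hj hi
    exact ⟨⟨by linarith, by linarith⟩, ⟨by linarith, by linarith⟩⟩
  have hwin_meet : ∀ t : Fin m, (A ∩ placedFerrers (lam t) (pos t).1 (pos t).2).Nonempty →
      ((α:ℝ) - c2*SQ*LG < ((pos t).1 : ℝ) ∧ ((pos t).1:ℝ) < (α:ℝ) + 0.8*c1*SQ*LG) ∧
      ((β:ℝ) - c2*SQ*LG < ((pos t).2 : ℝ) ∧ ((pos t).2:ℝ) < (β:ℝ) + 0.8*c1*SQ*LG) := by
    rintro t ⟨c, hcA, hcD⟩
    rw [CoverAux.mem_placedFerrers] at hcD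
    obtain ⟨h1, h2, h3, h4⟩ := hcellb t _ _ hcD
    obtain ⟨hA1, hA2, hA3, hA4⟩ := hcA
    have ha_le : ((pos t).1 : ℝ) ≤ (c.1 : ℝ) := by exact_mod_cast (by omega : (pos t).1 ≤ c.1)
    have hb_le : ((pos t).2 : ℝ) ≤ (c.2 : ℝ) := by exact_mod_cast (by omega : (pos t).2 ≤ c.2)
    push_cast at h3 h4
    exact ⟨⟨by linarith, by linarith⟩, ⟨by linarith, by linarith⟩⟩
  -- hook contradiction
  have hhook : ∀ s t : Fin m, s ≠ t →
      NearMeet lam pos A (0.1 * c1 * SQ * LG) s → NearMeet lam pos A (0.1 * c1 * SQ * LG) t →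
      (pos s).1 ≤ (pos t).1 → (pos t).2 ≤ (pos s).2 → False := by
    intro s t hst hns hnt hab hba
    obtain ⟨⟨hsa1, hsa2⟩, ⟨hsb1, hsb2⟩⟩ := hwin_near s hns
    obtain ⟨⟨hta1, hta2⟩, ⟨htb1, htb2⟩⟩ := hwin_near t hnt
    have habR : ((pos s).1 : ℝ) ≤ ((pos t).1 : ℝ) := by exact_mod_cast hab
    have hbaR : ((pos t).2 : ℝ) ≤ ((pos s).2 : ℝ) := by exact_mod_cast hba
    have hw_s : ((pos t).1, (pos s).2) ∈ placedFerrers (lam s) (pos s).1 (pos s).2 := by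
      rw [CoverAux.mem_placedFerrers]
      rw [show ((pos s).2 - (pos s).2 + 1 : ℤ) = 1 by ring]
      apply hbottom s _ (by omega)
      push_cast
      linarith
    have hw_t : ((pos t).1, (pos s).2) ∈ placedFerrers (lam t) (pos t).1 (pos t).2 := by
      rw [CoverAux.mem_placedFerrers]
      rw [show ((pos t).1 - (pos t).1 + 1 : ℤ) = 1 by ring]
      apply hleft t _ (by omega)
      push_cast
      linarith
    exact Set.disjoint_left.1 (hdisj hst) hw_s hw_t
  -- block separation
  have hbsep : ∀ s t : Fin m, s ≠ t →
      B ≤ |(pos s).1 - (pos t).1| ∨ B ≤ |(pos s).2 - (pos t).2| := by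
    intro s t hst
    by_contra hcon
    push_neg at hcon
    obtain ⟨ha, hb⟩ := hcon
    rw [abs_lt] at ha hb
    have hw_s : (max (pos s).1 (pos t).1, max (pos s).2 (pos t).2)
        ∈ placedFerrers (lam s) (pos s).1 (pos s).2 := by
      rw [CoverAux.mem_placedFerrers]
      apply hblock
      · have := le_max_left (pos s).1 (pos t).1; omega
      · rcases max_cases (pos s).1 (pos t).1 with ⟨h, -⟩ | ⟨h, -⟩ <;> omega
      · have := le_max_left (pos s).2 (pos t).2; omega
      · rcases max_cases (pos s).2 (pos t).2 with ⟨h, -⟩ | ⟨h, -⟩ <;> omega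
    have hw_t : (max (pos s).1 (pos t).1, max (pos s).2 (pos t).2)
        ∈ placedFerrers (lam t) (pos t).1 (pos t).2 := by
      rw [CoverAux.mem_placedFerrers]
      apply hblock
      · have := le_max_right (pos s).1 (pos t).1; omega
      · rcases max_cases (pos s).1 (pos t).1 with ⟨h, -⟩ | ⟨h, -⟩ <;> omega
      · have := le_max_right (pos s).2 (pos t).2; omega
      · rcases max_cases (pos s).2 (pos t).2 with ⟨h, -⟩ | ⟨h, -⟩ <;> omega
    exact Set.disjoint_left.1 (hdisj hst) hw_s hw_t
  -- chain separation for near-meeting diagrams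
  have hchain : ∀ s t : Fin m, s ≠ t →
      NearMeet lam pos A (0.1 * c1 * SQ * LG) s → NearMeet lam pos A (0.1 * c1 * SQ * LG) t →
      B ≤ |((pos s).1 + (pos s).2) - ((pos t).1 + (pos t).2)| := by
    intro s t hst hns hnt
    have horder : ∀ u v : Fin m, u ≠ v →
        NearMeet lam pos A (0.1 * c1 * SQ * LG) u → NearMeet lam pos A (0.1 * c1 * SQ * LG) v →
        (pos u).1 < (pos v).1 → (pos u).2 < (pos v).2 := by
      intro u v huv hnu hnv hlt
      by_contra hle
      push_neg at hle
      exact hhook u v huv hnu hnv hlt.le hle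
    rcases lt_trichotomy (pos s).1 (pos t).1 with h | h | h
    · have hb2 := horder s t hst hns hnt h
      have h1 : B ≤ ((pos t).1 + (pos t).2) - ((pos s).1 + (pos s).2) := by
        rcases hbsep s t hst with hs | hs
        · rw [abs_of_neg (by omega : (pos s).1 - (pos t).1 < 0)] at hs; omega
        · rw [abs_of_neg (by omega : (pos s).2 - (pos t).2 < 0)] at hs; omega
      rw [abs_of_nonpos (by omega)]
      omega
    · exfalso
      rcases le_or_gt (pos t).2 (pos s).2 with hbb | hbb
      · exact hhook s t hst hns hnt h.le hbb
      · exact hhook t s hst.symm hnt hns h.ge hbb.le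
    · have hb2 := horder t s hst.symm hnt hns h
      have h1 : B ≤ ((pos s).1 + (pos s).2) - ((pos t).1 + (pos t).2) := by
        rcases hbsep s t hst with hs | hs
        · rw [abs_of_pos (by omega : 0 < (pos s).1 - (pos t).1)] at hs; omega
        · rw [abs_of_pos (by omega : 0 < (pos s).2 - (pos t).2)] at hs; omega
      rw [abs_of_nonneg (by omega)]
      omega
  -- the finsets of near-meeting and meeting indices
  set S : Finset (Fin m) :=
    Finset.univ.filter (fun t => NearMeet lam pos A (0.1 * c1 * SQ * LG) t) with hSdef
  set T : Finset (Fin m) :=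
    Finset.univ.filter (fun t => (A ∩ placedFerrers (lam t) (pos t).1 (pos t).2).Nonempty) with hTdef
  -- card of S
  have hScard : (S.card : ℝ) ≤ (4*c1/c3 + 2) * LG := by
    have hc0 : (0:ℝ) ≤ 0.2*c1*SQ*LG := by positivity
    have hc1' : (0:ℝ) ≤ 1.6*c1*SQ*LG := by positivity
    have hlohi : α + β - ⌈(0.2:ℝ)*c1*SQ*LG⌉ ≤ α + β + ⌈(1.6:ℝ)*c1*SQ*LG⌉ := by
      have h1 : (0:ℤ) ≤ ⌈(0.2:ℝ)*c1*SQ*LG⌉ := Int.ceil_nonneg hc0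
      have h2 : (0:ℤ) ≤ ⌈(1.6:ℝ)*c1*SQ*LG⌉ := Int.ceil_nonneg hc1'
      omega
    have hkey := CoverAux.card_le_of_sep S (fun t => (pos t).1 + (pos t).2) B
      (α + β - ⌈(0.2:ℝ)*c1*SQ*LG⌉) (α + β + ⌈(1.6:ℝ)*c1*SQ*LG⌉) hB0 hlohi
      (by
        intro s hs t ht hne
        rw [hSdef, Finset.mem_filter] at hs ht
        exact hchain s t hne hs.2 ht.2)
      (by
        intro t ht
        rw [hSdef, Finset.mem_filter] at ht
        obtain ⟨⟨hw1, hw2⟩, ⟨hw3, hw4⟩⟩ := hwin_near t ht.2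
        have hceil := Int.le_ceil ((0.2:ℝ)*c1*SQ*LG)
        have hreal : ((α + β - ⌈(0.2:ℝ)*c1*SQ*LG⌉ : ℤ) : ℝ) < (((pos t).1 + (pos t).2 : ℤ):ℝ) := by
          push_cast
          linarith
        exact_mod_cast hreal.le)
      (by
        intro t ht
        rw [hSdef, Finset.mem_filter] at ht
        obtain ⟨⟨hw1, hw2⟩, ⟨hw3, hw4⟩⟩ := hwin_near t ht.2
        have hceil := Int.le_ceil ((1.6:ℝ)*c1*SQ*LG)
        have hreal : (((pos t).1 + (pos t).2 : ℤ):ℝ) < ((α + β + ⌈(1.6:ℝ)*c1*SQ*LG⌉ : ℤ) : ℝ) := by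
          push_cast
          linarith
        exact_mod_cast hreal.le)
    have hwidth : ((α + β + ⌈(1.6:ℝ)*c1*SQ*LG⌉ - (α + β - ⌈(0.2:ℝ)*c1*SQ*LG⌉) : ℤ) : ℝ)
        ≤ 1.8*c1*SQ*LG + 2 := by
      push_cast
      have e1 := Int.ceil_lt_add_one ((0.2:ℝ)*c1*SQ*LG)
      have e2 := Int.ceil_lt_add_one ((1.6:ℝ)*c1*SQ*LG)
      linarith
    have hBpos : (0:ℝ) < (B:ℝ) := by exact_mod_cast hB0
    have h1 : ((S.card:ℤ):ℝ) ≤ (((α + β + ⌈(1.6:ℝ)*c1*SQ*LG⌉ - (α + β - ⌈(0.2:ℝ)*c1*SQ*LG⌉))/B : ℤ):ℝ) + 1 := by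
      exact_mod_cast hkey
    have h2 := CoverAux.intCast_ediv_le
      (x := α + β + ⌈(1.6:ℝ)*c1*SQ*LG⌉ - (α + β - ⌈(0.2:ℝ)*c1*SQ*LG⌉)) hB0
    have h4 : ((α + β + ⌈(1.6:ℝ)*c1*SQ*LG⌉ - (α + β - ⌈(0.2:ℝ)*c1*SQ*LG⌉) : ℤ):ℝ)/(B:ℝ)
        ≤ (1.8*c1*SQ*LG + 2)/(c3*SQ/2) :=
      div_le_div₀ (by positivity) hwidth (by positivity) hBge
    have h5 : (1.8*c1*SQ*LG + 2)/(c3*SQ/2) ≤ 3.6*c1/c3*LG + 1 := by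
      rw [div_le_iff₀ (by positivity)]
      have hiden : (3.6*c1/c3*LG + 1)*(c3*SQ/2) = 1.8*c1*SQ*LG + c3*SQ/2 := by
        linear_combination (1.8*LG*SQ) * (div_mul_cancel₀ c1 (ne_of_gt hc3))
      rw [hiden]
      linarith
    have h6 : (S.card : ℝ) ≤ 3.6*c1/c3*LG + 2 := by
      have : ((S.card:ℤ):ℝ) = (S.card:ℝ) := by push_cast; ring
      linarith [h1, h2, h4, h5]
    have h8 : (0:ℝ) ≤ c1/c3*LG := by positivity
    have he : (4*c1/c3 + 2)*LG = 4*(c1/c3*LG) + 2*LG := by ring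
    have h6' : (S.card : ℝ) ≤ 3.6*(c1/c3*LG) + 2 := by
      have he2 : 3.6*c1/c3*LG = 3.6*(c1/c3*LG) := by ring
      linarith [he2 ▸ h6]
    rw [he]
    linarith
  -- card of T
  have hTcard : (T.card : ℝ) ≤ (K1 * LG)^2 := by
    have hcw : (0:ℝ) ≤ c2*SQ*LG := by positivity
    have hcw' : (0:ℝ) ≤ 0.8*c1*SQ*LG := by positivity
    have hlohi1 : α - ⌈c2*SQ*LG⌉ ≤ α + ⌈(0.8:ℝ)*c1*SQ*LG⌉ := by
      have h1 : (0:ℤ) ≤ ⌈c2*SQ*LG⌉ := Int.ceil_nonneg hcw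
      have h2 : (0:ℤ) ≤ ⌈(0.8:ℝ)*c1*SQ*LG⌉ := Int.ceil_nonneg hcw'
      omega
    have hlohi2 : β - ⌈c2*SQ*LG⌉ ≤ β + ⌈(0.8:ℝ)*c1*SQ*LG⌉ := by
      have h1 : (0:ℤ) ≤ ⌈c2*SQ*LG⌉ := Int.ceil_nonneg hcw
      have h2 : (0:ℤ) ≤ ⌈(0.8:ℝ)*c1*SQ*LG⌉ := Int.ceil_nonneg hcw'
      omega
    have hkey := CoverAux.card_le_of_sep2 T (fun t => (pos t).1) (fun t => (pos t).2) B
      (α - ⌈c2*SQ*LG⌉) (α + ⌈(0.8:ℝ)*c1*SQ*LG⌉) (β - ⌈c2*SQ*LG⌉) (β + ⌈(0.8:ℝ)*c1*SQ*LG⌉)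
      hB0 hlohi1 hlohi2
      (fun s _ t _ hne => hbsep s t hne)
      (by
        intro t ht
        rw [hTdef, Finset.mem_filter] at ht
        obtain ⟨⟨hw1, hw2⟩, -⟩ := hwin_meet t ht.2
        have hceil := Int.le_ceil (c2*SQ*LG)
        have hreal : ((α - ⌈c2*SQ*LG⌉ : ℤ) : ℝ) < (((pos t).1 : ℤ):ℝ) := by push_cast; linarith
        exact_mod_cast hreal.le)
      (by
        intro t ht
        rw [hTdef, Finset.mem_filter] at ht
        obtain ⟨⟨hw1, hw2⟩, -⟩ := hwin_meet t ht.2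
        have hceil := Int.le_ceil ((0.8:ℝ)*c1*SQ*LG)
        have hreal : (((pos t).1 : ℤ):ℝ) < ((α + ⌈(0.8:ℝ)*c1*SQ*LG⌉ : ℤ) : ℝ) := by push_cast; linarith
        exact_mod_cast hreal.le)
      (by
        intro t ht
        rw [hTdef, Finset.mem_filter] at ht
        obtain ⟨-, ⟨hw3, hw4⟩⟩ := hwin_meet t ht.2
        have hceil := Int.le_ceil (c2*SQ*LG)
        have hreal : ((β - ⌈c2*SQ*LG⌉ : ℤ) : ℝ) < (((pos t).2 : ℤ):ℝ) := by push_cast; linarith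
        exact_mod_cast hreal.le)
      (by
        intro t ht
        rw [hTdef, Finset.mem_filter] at ht
        obtain ⟨-, ⟨hw3, hw4⟩⟩ := hwin_meet t ht.2
        have hceil := Int.le_ceil ((0.8:ℝ)*c1*SQ*LG)
        have hreal : (((pos t).2 : ℤ):ℝ) < ((β + ⌈(0.8:ℝ)*c1*SQ*LG⌉ : ℤ) : ℝ) := by push_cast; linarith
        exact_mod_cast hreal.le)
    have hBpos : (0:ℝ) < (B:ℝ) := by exact_mod_cast hB0
    have hfactor : ∀ w : ℤ, ((w:ℤ):ℝ) ≤ (c1+c2)*SQ*LG + 2 → 0 ≤ w → (((w/B : ℤ):ℝ) + 1) ≤ K1 * LG := by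
      intro w hw hw0
      have h2 := CoverAux.intCast_ediv_le (x := w) hB0
      have h4 : ((w:ℤ):ℝ)/(B:ℝ) ≤ ((c1+c2)*SQ*LG + 2)/(c3*SQ/2) :=
        div_le_div₀ (by positivity) hw (by positivity) hBge
      have h5 : ((c1+c2)*SQ*LG + 2)/(c3*SQ/2) ≤ 2*(c1+c2)/c3*LG + 1 := by
        rw [div_le_iff₀ (by positivity)]
        have hiden : (2*(c1+c2)/c3*LG + 1)*(c3*SQ/2) = (c1+c2)*SQ*LG + c3*SQ/2 := by
          linear_combination (LG*SQ) * (div_mul_cancel₀ (c1+c2) (ne_of_gt hc3))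
        rw [hiden]
        linarith
      have h6 : (0:ℝ) ≤ (c1+c2)/c3 := by positivity
      have h7 : 2*(c1+c2)/c3*LG + 2 ≤ K1 * LG := by
        rw [hK1def]
        have h8 : (0:ℝ) ≤ (c1+c2)/c3*LG := by positivity
        have he : (2*(c1+c2)/c3 + 2)*LG = 2*((c1+c2)/c3*LG) + 2*LG := by ring
        have he2 : 2*(c1+c2)/c3*LG = 2*((c1+c2)/c3*LG) := by ring
        rw [he, he2]
        linarith
      calc (((w/B : ℤ):ℝ) + 1) ≤ ((w:ℤ):ℝ)/(B:ℝ) + 1 := by linarith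
      _ ≤ 2*(c1+c2)/c3*LG + 2 := by linarith
      _ ≤ K1 * LG := h7
    have hw1 : ((α + ⌈(0.8:ℝ)*c1*SQ*LG⌉ - (α - ⌈c2*SQ*LG⌉) : ℤ):ℝ) ≤ (c1+c2)*SQ*LG + 2 := by
      push_cast
      have e1 := Int.ceil_lt_add_one (c2*SQ*LG)
      have e2 := Int.ceil_lt_add_one ((0.8:ℝ)*c1*SQ*LG)
      nlinarith [hSQpos, hLGpos, hc1, hc2]
    have hw2 : ((β + ⌈(0.8:ℝ)*c1*SQ*LG⌉ - (β - ⌈c2*SQ*LG⌉) : ℤ):ℝ) ≤ (c1+c2)*SQ*LG + 2 := by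
      push_cast
      have e1 := Int.ceil_lt_add_one (c2*SQ*LG)
      have e2 := Int.ceil_lt_add_one ((0.8:ℝ)*c1*SQ*LG)
      nlinarith [hSQpos, hLGpos, hc1, hc2]
    have hnn1 : (0:ℤ) ≤ (α + ⌈(0.8:ℝ)*c1*SQ*LG⌉ - (α - ⌈c2*SQ*LG⌉)) := by omega
    have hnn2 : (0:ℤ) ≤ (β + ⌈(0.8:ℝ)*c1*SQ*LG⌉ - (β - ⌈c2*SQ*LG⌉)) := by omega
    have hf1 := hfactor _ hw1 hnn1
    have hf2 := hfactor _ hw2 hnn2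
    have hp1 : (0:ℤ) ≤ (α + ⌈(0.8:ℝ)*c1*SQ*LG⌉ - (α - ⌈c2*SQ*LG⌉))/B + 1 := by
      have := Int.ediv_nonneg hnn1 hB0.le
      omega
    have hp2 : (0:ℤ) ≤ (β + ⌈(0.8:ℝ)*c1*SQ*LG⌉ - (β - ⌈c2*SQ*LG⌉))/B + 1 := by
      have := Int.ediv_nonneg hnn2 hB0.le
      omega
    have hcast : (T.card : ℝ) ≤
        ((((α + ⌈(0.8:ℝ)*c1*SQ*LG⌉ - (α - ⌈c2*SQ*LG⌉))/B + 1 : ℤ)):ℝ) *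
        ((((β + ⌈(0.8:ℝ)*c1*SQ*LG⌉ - (β - ⌈c2*SQ*LG⌉))/B + 1 : ℤ)):ℝ) := by
      exact_mod_cast hkey
    calc (T.card : ℝ) ≤ _ := hcast
    _ ≤ (K1 * LG) * (K1 * LG) := by
        apply mul_le_mul (by push_cast at hf1 ⊢; linarith) (by push_cast at hf2 ⊢; linarith)
          (by exact_mod_cast hp2) (by positivity)
    _ = (K1 * LG)^2 := by ring
  -- finiteness and per-index bounds
  have hDfin : ∀ t : Fin m, (placedFerrers (lam t) (pos t).1 (pos t).2).Finite :=
    fun t => CoverAux.placed_finite _ _ _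
  have hle_n : ∀ t : Fin m,
      ((A ∩ placedFerrers (lam t) (pos t).1 (pos t).2).ncard : ℝ) ≤ (n:ℝ) := by
    intro t
    have h1 : (A ∩ placedFerrers (lam t) (pos t).1 (pos t).2).ncard
        ≤ (placedFerrers (lam t) (pos t).1 (pos t).2).ncard :=
      Set.ncard_le_ncard Set.inter_subset_right (hDfin t)
    have h2 := CoverAux.ncard_placed_le (lam t) (pos t).1 (pos t).2
    exact_mod_cast le_trans h1 h2
  have hfar : ∀ t : Fin m, ¬ NearMeet lam pos A (0.1 * c1 * SQ * LG) t →
      ((A ∩ placedFerrers (lam t) (pos t).1 (pos t).2).ncard : ℝ) ≤ (n:ℝ)^((1:ℝ)-δ) := by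
    intro t hnt
    have hsub : A ∩ placedFerrers (lam t) (pos t).1 (pos t).2 ⊆
        (fun c : ℤ × ℤ => (c.1 + (pos t).1 - 1, c.2 + (pos t).2 - 1)) ''
          (ferrersDiagram (lam t) ∩ {c : ℤ × ℤ |
            0.1 * c1 * SQ * LG < (c.1 : ℝ) ∨ 0.1 * c1 * SQ * LG < (c.2 : ℝ)}) := by
      rintro c ⟨hcA, hcD⟩
      have hpre := CoverAux.mem_placedFerrers.1 hcD
      refine ⟨(c.1 - (pos t).1 + 1, c.2 - (pos t).2 + 1), ⟨hpre, ?_⟩, by ext <;> simp <;> ring⟩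
      by_contra hfarc
      simp only [Set.mem_setOf_eq, not_or, not_lt] at hfarc
      exact hnt ⟨c, hcA, hcD, hfarc.1, hfarc.2⟩
    have hfin : ((fun c : ℤ × ℤ => (c.1 + (pos t).1 - 1, c.2 + (pos t).2 - 1)) ''
          (ferrersDiagram (lam t) ∩ {c : ℤ × ℤ |
            0.1 * c1 * SQ * LG < (c.1 : ℝ) ∨ 0.1 * c1 * SQ * LG < (c.2 : ℝ)})).Finite :=
      (Set.Finite.inter_of_left (CoverAux.ferrers_finite (lam t)) _).image _
    have h1 := Set.ncard_le_ncard hsub hfin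
    rw [Set.ncard_image_of_injective _ (CoverAux.translate_inj (pos t).1 (pos t).2)] at h1
    calc ((A ∩ placedFerrers (lam t) (pos t).1 (pos t).2).ncard : ℝ)
        ≤ ((ferrersDiagram (lam t) ∩ {c : ℤ × ℤ |
            0.1 * c1 * SQ * LG < (c.1 : ℝ) ∨ 0.1 * c1 * SQ * LG < (c.2 : ℝ)}).ncard : ℝ) := by
          exact_mod_cast h1
    _ ≤ (n:ℝ)^((1:ℝ)-δ) := hII t
  -- total count
  have hsplit : (A ∩ ⋃ t, placedFerrers (lam t) (pos t).1 (pos t).2) =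
      ⋃ t ∈ (Finset.univ : Finset (Fin m)), (A ∩ placedFerrers (lam t) (pos t).1 (pos t).2) := by
    rw [Set.inter_iUnion]
    simp
  have hcount : (A ∩ ⋃ t, placedFerrers (lam t) (pos t).1 (pos t).2).ncard
      ≤ ∑ t : Fin m, (A ∩ placedFerrers (lam t) (pos t).1 (pos t).2).ncard := by
    rw [hsplit]
    exact CoverAux.ncard_biUnion_le _ _
      (fun t _ => Set.Finite.subset (hDfin t) Set.inter_subset_right)
  have hcountR : ((A ∩ ⋃ t, placedFerrers (lam t) (pos t).1 (pos t).2).ncard : ℝ)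
      ≤ ∑ t : Fin m, ((A ∩ placedFerrers (lam t) (pos t).1 (pos t).2).ncard : ℝ) := by
    have := (Nat.cast_le (α := ℝ)).2 hcount
    push_cast at this
    exact this
  have hsplit2 : ∑ t : Fin m, ((A ∩ placedFerrers (lam t) (pos t).1 (pos t).2).ncard : ℝ)
      = ∑ t ∈ S, ((A ∩ placedFerrers (lam t) (pos t).1 (pos t).2).ncard : ℝ)
      + ∑ t ∈ Finset.univ.filter (fun t => ¬ NearMeet lam pos A (0.1 * c1 * SQ * LG) t),
          ((A ∩ placedFerrers (lam t) (pos t).1 (pos t).2).ncard : ℝ) := by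
    rw [hSdef]
    exact (Finset.sum_filter_add_sum_filter_not _ _ _).symm
  have hsplit3 : ∑ t ∈ Finset.univ.filter (fun t => ¬ NearMeet lam pos A (0.1 * c1 * SQ * LG) t),
          ((A ∩ placedFerrers (lam t) (pos t).1 (pos t).2).ncard : ℝ)
      = ∑ t ∈ (Finset.univ.filter (fun t => ¬ NearMeet lam pos A (0.1 * c1 * SQ * LG) t)).filter
            (fun t => (A ∩ placedFerrers (lam t) (pos t).1 (pos t).2).Nonempty),
          ((A ∩ placedFerrers (lam t) (pos t).1 (pos t).2).ncard : ℝ)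
      + ∑ t ∈ (Finset.univ.filter (fun t => ¬ NearMeet lam pos A (0.1 * c1 * SQ * LG) t)).filter
            (fun t => ¬ (A ∩ placedFerrers (lam t) (pos t).1 (pos t).2).Nonempty),
          ((A ∩ placedFerrers (lam t) (pos t).1 (pos t).2).ncard : ℝ) :=
    (Finset.sum_filter_add_sum_filter_not _ _ _).symm
  have hzero : ∑ t ∈ (Finset.univ.filter (fun t => ¬ NearMeet lam pos A (0.1 * c1 * SQ * LG) t)).filter
            (fun t => ¬ (A ∩ placedFerrers (lam t) (pos t).1 (pos t).2).Nonempty),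
          ((A ∩ placedFerrers (lam t) (pos t).1 (pos t).2).ncard : ℝ) = 0 := by
    apply Finset.sum_eq_zero
    intro t ht
    simp only [Finset.mem_filter] at ht
    rw [Set.not_nonempty_iff_eq_empty.1 ht.2]
    simp
  have hS_sum : ∑ t ∈ S, ((A ∩ placedFerrers (lam t) (pos t).1 (pos t).2).ncard : ℝ)
      ≤ (S.card : ℝ) * (n:ℝ) := by
    have := Finset.sum_le_card_nsmul S
      (fun t => ((A ∩ placedFerrers (lam t) (pos t).1 (pos t).2).ncard : ℝ)) ((n:ℝ))
      (fun t _ => hle_n t)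
    simpa [nsmul_eq_mul] using this
  have hF_sum : ∑ t ∈ (Finset.univ.filter (fun t => ¬ NearMeet lam pos A (0.1 * c1 * SQ * LG) t)).filter
            (fun t => (A ∩ placedFerrers (lam t) (pos t).1 (pos t).2).Nonempty),
          ((A ∩ placedFerrers (lam t) (pos t).1 (pos t).2).ncard : ℝ)
      ≤ (T.card : ℝ) * (n:ℝ)^((1:ℝ)-δ) := by
    have hsub : (Finset.univ.filter (fun t => ¬ NearMeet lam pos A (0.1 * c1 * SQ * LG) t)).filter
            (fun t => (A ∩ placedFerrers (lam t) (pos t).1 (pos t).2).Nonempty) ⊆ T := by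
      intro t ht
      simp only [Finset.mem_filter] at ht
      rw [hTdef, Finset.mem_filter]
      exact ⟨Finset.mem_univ t, ht.2⟩
    have h1 := Finset.sum_le_card_nsmul
      ((Finset.univ.filter (fun t => ¬ NearMeet lam pos A (0.1 * c1 * SQ * LG) t)).filter
            (fun t => (A ∩ placedFerrers (lam t) (pos t).1 (pos t).2).Nonempty))
      (fun t => ((A ∩ placedFerrers (lam t) (pos t).1 (pos t).2).ncard : ℝ)) ((n:ℝ)^((1:ℝ)-δ))
      (by
        intro t ht
        simp only [Finset.mem_filter] at ht
        exact hfar t ht.1.2)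
    have h2 : (((Finset.univ.filter (fun t => ¬ NearMeet lam pos A (0.1 * c1 * SQ * LG) t)).filter
            (fun t => (A ∩ placedFerrers (lam t) (pos t).1 (pos t).2).Nonempty)).card : ℝ)
        ≤ (T.card : ℝ) := by
      exact_mod_cast Finset.card_le_card hsub
    have h3 : (0:ℝ) ≤ (n:ℝ)^((1:ℝ)-δ) := Real.rpow_nonneg (by positivity) _
    calc _ ≤ _ := h1
    _ ≤ (T.card : ℝ) * (n:ℝ)^((1:ℝ)-δ) := by
        rw [nsmul_eq_mul]
        exact mul_le_mul_of_nonneg_right h2 h3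
  -- put everything together
  have hnn : (0:ℝ) ≤ (n:ℝ) := by positivity
  calc ((A ∩ ⋃ t, placedFerrers (lam t) (pos t).1 (pos t).2).ncard : ℝ)
      ≤ ∑ t : Fin m, ((A ∩ placedFerrers (lam t) (pos t).1 (pos t).2).ncard : ℝ) := hcountR
  _ ≤ (S.card : ℝ) * (n:ℝ) + (T.card : ℝ) * (n:ℝ)^((1:ℝ)-δ) := by
      rw [hsplit2, hsplit3, hzero]
      linarith [hS_sum, hF_sum]
  _ ≤ ((4*c1/c3 + 2) * LG) * (n:ℝ) + (K1 * LG)^2 * (n:ℝ)^((1:ℝ)-δ) := by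
      have h3 : (0:ℝ) ≤ (n:ℝ)^((1:ℝ)-δ) := Real.rpow_nonneg (by positivity) _
      have := mul_le_mul_of_nonneg_right hScard hnn
      have := mul_le_mul_of_nonneg_right hTcard h3
      linarith
  _ ≤ ((4*c1/c3 + 2) * LG) * (n:ℝ) + (n:ℝ) * LG := by linarith [hEV4]
  _ = (4*c1/c3 + 3) * (n:ℝ) * LG := by ring
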